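/- Fix integers m ≥ 1 and n ≥ 3, set ν = (1+n)/2 and p* = 1/(1+m), and for each positive integer N define Δ*(N) = log(1 + 1/(N + (1+m)ν)) − (1/(1+m)) · Σ_{x=0}^N C(N,x) (p*)^x (1 − p*)^{N−x} · (−log(1 − 1/(x + 1 + ν))). Then (N + 1)² · Δ*(N) → (1/2)(1 − (1+m)) = −m/2 as N → ∞. -/

import Mathlib

open Finset Filter

/-- Binomial(N, q) probability mass function at `x`. -/
noncomputable def binPMF (N : ℕ) (q : ℝ) (x : ℕ) : ℝ :=
  (N.choose x : ℝ) * q ^ x * (1 - q) ^ (N - x)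

noncomputable def glog (t : ℝ) : ℝ := Real.log (t+1) - Real.log t

lemma binPMF_eq_bernstein (N : ℕ) (q : ℝ) (x : ℕ) :
    binPMF N q x = (bernsteinPolynomial ℝ N x).eval q := by
  simp [binPMF, bernsteinPolynomial, mul_comm, mul_assoc, mul_left_comm]

lemma sum_binPMF (N : ℕ) (q : ℝ) : ∑ x ∈ range (N+1), binPMF N q x = 1 := by
  have := congrArg (Polynomial.eval q) (bernsteinPolynomial.sum ℝ N)
  simpa [binPMF_eq_bernstein, Polynomial.eval_finset_sum] using this

lemma sum_binPMF_mul (N : ℕ) (q : ℝ) :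
    ∑ x ∈ range (N+1), binPMF N q x * x = N * q := by
  have := congrArg (Polynomial.eval q) (bernsteinPolynomial.sum_smul ℝ N)
  simp only [Polynomial.eval_finset_sum, nsmul_eq_mul, Polynomial.eval_mul,
    Polynomial.eval_natCast, Polynomial.eval_X] at this
  rw [← this]
  exact Finset.sum_congr rfl fun x _ => by rw [binPMF_eq_bernstein]; ring

lemma sum_binPMF_mul_sub (N : ℕ) (q : ℝ) :
    ∑ x ∈ range (N+1), binPMF N q x * (x * (x - 1)) = N * (N-1) * q^2 := by
  rcases Nat.eq_zero_or_pos N with hN | hN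
  · subst hN; simp [binPMF]
  have := congrArg (Polynomial.eval q) (bernsteinPolynomial.sum_mul_smul ℝ N)
  simp only [Polynomial.eval_finset_sum, nsmul_eq_mul, Polynomial.eval_mul,
    Polynomial.eval_natCast, Polynomial.eval_pow, Polynomial.eval_X] at this
  rw [show ((N:ℝ) * ((N:ℝ)-1) * q^2) = ((N * (N-1) : ℕ) : ℝ) * q^2 by
    push_cast [Nat.cast_sub hN]; ring]
  rw [← this]
  refine Finset.sum_congr rfl fun x _ => ?_
  rw [binPMF_eq_bernstein]
  rcases Nat.eq_zero_or_pos x with h | h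
  · subst h; simp
  · push_cast [Nat.cast_sub h]
    ring

lemma sum_binPMF_var (N : ℕ) (q : ℝ) :
    ∑ x ∈ range (N+1), binPMF N q x * ((x:ℝ) - N*q)^2 = N*q*(1-q) := by
  have h1 := sum_binPMF N q
  have h2 := sum_binPMF_mul N q
  have h3 := sum_binPMF_mul_sub N q
  have key : ∀ x : ℕ, binPMF N q x * ((x:ℝ) - N*q)^2 =
      binPMF N q x * ((x:ℝ) * ((x:ℝ)-1)) + (1 - 2*(N:ℝ)*q) * (binPMF N q x * x)
        + ((N:ℝ)*q)^2 * binPMF N q x := fun x => by ring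
  rw [Finset.sum_congr rfl fun x _ => key x]
  rw [Finset.sum_add_distrib, Finset.sum_add_distrib, ← Finset.mul_sum, ← Finset.mul_sum,
    h1, h2, h3]
  ring

lemma binPMF_nonneg {N : ℕ} {q : ℝ} (h0 : 0 ≤ q) (h1 : q ≤ 1) (x : ℕ) :
    0 ≤ binPMF N q x := by
  unfold binPMF
  have : (0:ℝ) ≤ 1 - q := by linarith
  positivity

lemma sum_binPMF_exp (N : ℕ) (q t : ℝ) :
    ∑ x ∈ range (N+1), binPMF N q x * Real.exp (t*x) = (1 - q + q * Real.exp t)^N := by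
  rw [show (1 - q + q * Real.exp t) = q * Real.exp t + (1-q) by ring, add_pow]
  refine Finset.sum_congr rfl fun x hx => ?_
  rw [mul_pow, ← Real.exp_nat_mul]
  unfold binPMF
  rw [mul_comm ((x:ℝ)) t]
  ring

lemma exp_le_quadratic {s : ℝ} (h : |s| ≤ 1) : Real.exp s ≤ 1 + s + s^2 := by
  have h2 := Real.exp_bound h (by norm_num : 0 < 2)
  have : |Real.exp s - (1 + s)| ≤ |s|^2 * (3/4) := by
    have : ∑ i ∈ range 2, s ^ i / (i.factorial : ℝ) = 1 + s := by
      simp [Finset.sum_range_succ]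
    calc |Real.exp s - (1+s)| = |Real.exp s - ∑ i ∈ range 2, s ^ i / (i.factorial : ℝ)| := by
          rw [this]
      _ ≤ |s|^2 * ((2:ℕ).succ / ((2:ℕ).factorial * (2:ℕ))) := h2
      _ = |s|^2 * (3/4) := by norm_num
  have hs2 : |s|^2 = s^2 := sq_abs s
  nlinarith [abs_nonneg (Real.exp s - (1+s)), le_abs_self (Real.exp s - (1+s)), sq_nonneg s]

lemma base_le_exp {q t : ℝ} (hq0 : 0 ≤ q) (ht : |t| ≤ 1) :
    1 - q + q * Real.exp t ≤ Real.exp (q*t + q*t^2) := by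
  have h1 : Real.exp t ≤ 1 + t + t^2 := exp_le_quadratic ht
  have h2 : 1 - q + q * Real.exp t ≤ 1 + (q*t + q*t^2) := by nlinarith
  exact h2.trans (by linarith [Real.add_one_le_exp (q*t + q*t^2)])

lemma mgf_bound (N : ℕ) {q t : ℝ} (hq0 : 0 ≤ q) (hq1 : q ≤ 1) (ht : |t| ≤ 1) :
    Real.exp (-(t*(N*q))) * (1 - q + q * Real.exp t)^N ≤ Real.exp (N*t^2) := by
  have hbase0 : 0 ≤ 1 - q + q * Real.exp t := by
    have := Real.exp_pos t; nlinarith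
  have h := pow_le_pow_left₀ hbase0 (base_le_exp hq0 ht) N
  rw [← Real.exp_nat_mul] at h
  calc Real.exp (-(t*(N*q))) * (1 - q + q * Real.exp t)^N
      ≤ Real.exp (-(t*(N*q))) * Real.exp (N*(q*t + q*t^2)) := by
        exact mul_le_mul_of_nonneg_left h (Real.exp_pos _).le
    _ = Real.exp (N*q*t^2 + (-(t*(N*q)) + N*q*t)) := by rw [← Real.exp_add]; ring_nf
    _ ≤ Real.exp (N*t^2) := by
        apply Real.exp_le_exp.2
        nlinarith [mul_nonneg (mul_nonneg (Nat.cast_nonneg (α := ℝ) N) (sub_nonneg.2 hq1)) (sq_nonneg t)]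

lemma pow_two_mul_le (y : ℝ) {t : ℝ} (ht : 0 < t) (k : ℕ) :
    y^(2*k) ≤ (2*k).factorial * ((t⁻¹)^(2*k) * (Real.exp (t*y) + Real.exp (-(t*y)))) := by
  have hz : 0 ≤ t * |y| := mul_nonneg ht.le (abs_nonneg y)
  have h1 : (t*|y|)^(2*k) / ((2*k).factorial : ℝ) ≤ Real.exp (t*|y|) := by
    calc (t*|y|)^(2*k) / ((2*k).factorial : ℝ)
        ≤ ∑ i ∈ range (2*k+1), (t*|y|)^i / (i.factorial : ℝ) := by
          refine Finset.single_le_sum (f := fun i => (t*|y|)^i / (i.factorial : ℝ))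
            (fun i _ => by positivity) (self_mem_range_succ (2*k))
      _ ≤ Real.exp (t*|y|) := Real.sum_le_exp_of_nonneg hz _
  have h2 : Real.exp (t*|y|) ≤ Real.exp (t*y) + Real.exp (-(t*y)) := by
    rcases abs_cases y with ⟨h, _⟩ | ⟨h, _⟩
    · rw [h]; linarith [(Real.exp_pos (-(t*y))).le]
    · rw [h, mul_neg]; linarith [(Real.exp_pos (t*y)).le]
  have hy : y^(2*k) = |y|^(2*k) := by
    rw [pow_mul, pow_mul, sq_abs]
  have ht' : t ≠ 0 := ht.ne'
  calc y^(2*k) = (t*|y|)^(2*k) * (t⁻¹)^(2*k) := by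
        rw [← mul_pow, mul_assoc, mul_comm |y|, ← mul_assoc, mul_inv_cancel₀ ht', one_mul]; exact hy
    _ ≤ ((2*k).factorial * Real.exp (t*|y|)) * (t⁻¹)^(2*k) := by
        have := (div_le_iff₀ (by positivity : (0:ℝ) < ((2*k).factorial : ℝ))).1 h1
        apply mul_le_mul_of_nonneg_right _ (by positivity)
        linarith
    _ ≤ ((2*k).factorial * (Real.exp (t*y) + Real.exp (-(t*y)))) * (t⁻¹)^(2*k) := by
        apply mul_le_mul_of_nonneg_right _ (by positivity)
        have : (0:ℝ) < ((2*k).factorial : ℝ) := by positivity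
        nlinarith
    _ = (2*k).factorial * ((t⁻¹)^(2*k) * (Real.exp (t*y) + Real.exp (-(t*y)))) := by ring

lemma sum_binPMF_central_moment_le (N k : ℕ) (hN : 1 ≤ N) {q : ℝ} (hq0 : 0 ≤ q) (hq1 : q ≤ 1) :
    ∑ x ∈ range (N+1), binPMF N q x * ((x:ℝ) - N*q)^(2*k)
      ≤ 6 * (2*k).factorial * (N:ℝ)^k := by
  have hN1 : (1:ℝ) ≤ (N:ℝ) := by exact_mod_cast hN
  have hNpos : (0:ℝ) < N := by linarith
  have hsq : 1 ≤ Real.sqrt N := by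
    rw [show (1:ℝ) = Real.sqrt 1 by simp]; exact Real.sqrt_le_sqrt hN1
  set t : ℝ := (Real.sqrt N)⁻¹ with htdef
  have ht0 : 0 < t := by positivity
  have ht1 : t ≤ 1 := by
    rw [htdef]; exact inv_le_one_of_one_le₀ hsq
  have htabs : |t| ≤ 1 := by rw [abs_of_pos ht0]; exact ht1
  have hinv : (t⁻¹)^(2*k) = (N:ℝ)^k := by
    rw [htdef, inv_inv, pow_mul, Real.sq_sqrt hNpos.le]
  have hNt2 : (N:ℝ)*t^2 = 1 := by
    rw [htdef, inv_pow, Real.sq_sqrt hNpos.le]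
    field_simp
  -- the two exponential sums
  have hplus : ∑ x ∈ range (N+1), binPMF N q x * Real.exp (t*((x:ℝ) - N*q))
      ≤ Real.exp 1 := by
    have : ∀ x : ℕ, binPMF N q x * Real.exp (t*((x:ℝ) - N*q))
        = Real.exp (-(t*(N*q))) * (binPMF N q x * Real.exp (t*x)) := fun x => by
      rw [show t*((x:ℝ) - N*q) = t*x + (-(t*(N*q))) by ring, Real.exp_add]; ring
    rw [Finset.sum_congr rfl fun x _ => this x, ← Finset.mul_sum, sum_binPMF_exp]
    have h := mgf_bound N hq0 hq1 htabs
    rwa [hNt2] at h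
  have hminus : ∑ x ∈ range (N+1), binPMF N q x * Real.exp (-(t*((x:ℝ) - N*q)))
      ≤ Real.exp 1 := by
    have : ∀ x : ℕ, binPMF N q x * Real.exp (-(t*((x:ℝ) - N*q)))
        = Real.exp (-(-t*(N*q))) * (binPMF N q x * Real.exp ((-t)*x)) := fun x => by
      rw [show -(t*((x:ℝ) - N*q)) = (-t)*x + (-(-t*(N*q))) by ring, Real.exp_add]; ring
    rw [Finset.sum_congr rfl fun x _ => this x, ← Finset.mul_sum, sum_binPMF_exp]
    have h := mgf_bound (t := -t) N hq0 hq1 (by rwa [abs_neg])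
    rwa [show (N:ℝ)*(-t)^2 = (N:ℝ)*t^2 by ring, hNt2] at h
  calc ∑ x ∈ range (N+1), binPMF N q x * ((x:ℝ) - N*q)^(2*k)
      ≤ ∑ x ∈ range (N+1), binPMF N q x *
          ((2*k).factorial * ((t⁻¹)^(2*k) * (Real.exp (t*((x:ℝ)-N*q)) + Real.exp (-(t*((x:ℝ)-N*q)))))) := by
        refine Finset.sum_le_sum fun x _ => ?_
        exact mul_le_mul_of_nonneg_left (pow_two_mul_le _ ht0 k) (binPMF_nonneg hq0 hq1 x)
    _ = (2*k).factorial * (N:ℝ)^k *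
          ((∑ x ∈ range (N+1), binPMF N q x * Real.exp (t*((x:ℝ)-N*q)))
           + ∑ x ∈ range (N+1), binPMF N q x * Real.exp (-(t*((x:ℝ)-N*q)))) := by
        rw [← Finset.sum_add_distrib]
        rw [Finset.mul_sum]
        refine Finset.sum_congr rfl fun x _ => ?_
        rw [hinv]; ring
    _ ≤ (2*k).factorial * (N:ℝ)^k * (Real.exp 1 + Real.exp 1) := by
        apply mul_le_mul_of_nonneg_left (by linarith) (by positivity)
    _ ≤ 6 * (2*k).factorial * (N:ℝ)^k := by
        have h3 : Real.exp 1 ≤ 3 := by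
          have := Real.exp_one_lt_d9
          linarith
        have hfac : (0:ℝ) ≤ ((2*k).factorial : ℝ) := by positivity
        have hNk : (0:ℝ) ≤ (N:ℝ)^k := by positivity
        nlinarith [mul_nonneg hfac hNk]

lemma glog_nonneg {t : ℝ} (ht : 0 < t) : 0 ≤ glog t :=
  sub_nonneg.2 (Real.log_le_log ht (by linarith))

lemma glog_le {t : ℝ} (ht : 0 < t) : glog t ≤ 1/t := by
  have h1 : glog t = Real.log ((t+1)/t) := by
    rw [glog, Real.log_div (by linarith) ht.ne']
  rw [h1]
  have h2 : Real.log ((t+1)/t) ≤ (t+1)/t - 1 := Real.log_le_sub_one_of_pos (by positivity)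
  have h3 : (t+1)/t - 1 = 1/t := by field_simp; ring
  linarith

lemma glog_taylor_remainder {μ δ : ℝ} (hμ : 2 ≤ μ) (hδ : |δ| ≤ μ/2) :
    |glog (μ+δ) - glog μ - (1/(μ+1) - 1/μ)*δ - (1/μ^2 - 1/(μ+1)^2)*δ^2/2|
      ≤ 2*|δ|^3/μ^4 := by
  have hμ0 : (0:ℝ) < μ := by linarith
  have hδlow : -(μ/2) ≤ δ := neg_le_of_abs_le hδ
  set F : ℝ → ℝ := fun a => Real.log (a+δ) - Real.log a - δ * a⁻¹ + δ^2/2 * (a^2)⁻¹ with hF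
  have key : ∀ a ∈ Set.Icc μ (μ+1), HasDerivAt F (-δ^3/(a^3*(a+δ))) a := by
    rintro a ⟨ha1, ha2⟩
    have ha0 : 0 < a := by linarith
    have haδ : 0 < a + δ := by linarith
    have h1 : HasDerivAt (fun a : ℝ => Real.log (a+δ)) (1/(a+δ)) a := by
      have := (Real.hasDerivAt_log haδ.ne').comp a ((hasDerivAt_id a).add_const δ)
      simpa [one_div, Function.comp_def] using this
    have h2 : HasDerivAt (fun a : ℝ => Real.log a) (1/a) a := by
      simpa [one_div] using Real.hasDerivAt_log ha0.ne'
    have h3 := (hasDerivAt_inv ha0.ne').const_mul δ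
    have hp : HasDerivAt (fun a : ℝ => a^2) (2*a) a := by
      simpa [mul_comm] using hasDerivAt_pow 2 a
    have h4 := (hp.inv (by positivity)).const_mul (δ^2/2)
    have := ((h1.sub h2).sub h3).add h4
    refine this.congr_deriv ?_
    have ha2 : a^2 ≠ 0 := by positivity
    field_simp
    ring
  have hab : μ < μ + 1 := by linarith
  obtain ⟨ξ, hξ, hslope⟩ := exists_hasDerivAt_eq_slope F (fun a => -δ^3/(a^3*(a+δ))) hab
    (fun a ha => (key a ha).continuousAt.continuousWithinAt)
    (fun a ha => key a (Set.mem_Icc_of_Ioo ha))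
  have hξ1 : μ < ξ := hξ.1
  have hξ2 : ξ < μ + 1 := hξ.2
  have hξδ : μ/2 ≤ ξ + δ := by linarith
  have hFdiff : F (μ+1) - F μ =
      glog (μ+δ) - glog μ - (1/(μ+1) - 1/μ)*δ - (1/μ^2 - 1/(μ+1)^2)*δ^2/2 := by
    rw [hF]
    simp only [glog]
    have h1 : μ + 1 + δ = μ + δ + 1 := by ring
    rw [h1]
    have hμ1 : (μ:ℝ) + 1 ≠ 0 := by positivity
    field_simp
    ring
  rw [show μ+1-μ = (1:ℝ) by ring, div_one] at hslope
  rw [← hFdiff, ← hslope]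
  have hξ0 : (0:ℝ) < ξ := by linarith
  have hξδ0 : (0:ℝ) < ξ + δ := by linarith
  rw [abs_div, abs_neg, abs_pow]
  have hden : μ^3 * (μ/2) ≤ ξ^3*(ξ+δ) := by
    have h1 : μ^3 ≤ ξ^3 := pow_le_pow_left₀ hμ0.le hξ1.le 3
    exact mul_le_mul h1 hξδ (by positivity) (by positivity)
  have habs : |ξ^3*(ξ+δ)| = ξ^3*(ξ+δ) := abs_of_pos (by positivity)
  rw [habs]
  rw [div_le_div_iff₀ (by positivity) (by positivity)]
  calc |δ|^3 * μ^4 = (|δ|^3 * 2) * (μ^3 * (μ/2)) := by ring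
    _ ≤ (|δ|^3 * 2) * (ξ^3*(ξ+δ)) := by
        apply mul_le_mul_of_nonneg_left hden (by positivity)
    _ = 2*|δ|^3 * (ξ^3*(ξ+δ)) := by ring

lemma R_est {μ δ D : ℝ} (hμ : 2 ≤ μ) (hD : 1 ≤ D) (hDμ : 2*D ≤ μ) (hshift : 2 ≤ μ + δ) :
    |glog (μ+δ) - glog μ - (1/(μ+1) - 1/μ)*δ - (1/μ^2 - 1/(μ+1)^2)*δ^2/2|
      ≤ 2*|δ|^3/μ^4 + 4*δ^10/D^8 := by
  have hμ0 : (0:ℝ) < μ := by linarith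
  by_cases hcase : |δ| ≤ μ/2
  · have := glog_taylor_remainder hμ hcase
    have h2 : (0:ℝ) ≤ 4*δ^10/D^8 := by positivity
    linarith
  -- bad case : |δ| > μ/2 ≥ D
  push_neg at hcase
  have hDδ : D ≤ |δ| := by linarith
  have hδ1 : 1 ≤ |δ| := le_trans hD hDδ
  have hδ2 : 1 ≤ δ^2 := by nlinarith [sq_abs δ]
  -- crude bound on each piece
  have hg1 : |glog (μ+δ)| ≤ 1/2 := by
    rw [abs_of_nonneg (glog_nonneg (by linarith))]
    calc glog (μ+δ) ≤ 1/(μ+δ) := glog_le (by linarith)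
      _ ≤ 1/2 := by
          rw [div_le_div_iff₀ (by linarith) (by norm_num)]; linarith
  have hg2 : |glog μ| ≤ 1/2 := by
    rw [abs_of_nonneg (glog_nonneg hμ0)]
    calc glog μ ≤ 1/μ := glog_le hμ0
      _ ≤ 1/2 := by rw [div_le_div_iff₀ hμ0 (by norm_num)]; linarith
  have hs1 : |(1/(μ+1) - 1/μ)*δ| ≤ δ^2 := by
    rw [abs_mul]
    have h1 : |1/(μ+1) - 1/μ| ≤ 1 := by
      rw [abs_le]
      constructor <;>
        [ (have : (0:ℝ) < 1/(μ+1) := by positivity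
           have : 1/μ ≤ 1 := by rw [div_le_one hμ0]; linarith
           nlinarith [one_div_pos.2 (show (0:ℝ) < μ+1 by linarith)]);
          (have h2 : 1/(μ+1) ≤ 1/μ := by
             apply one_div_le_one_div_of_le hμ0; linarith
           have : (0:ℝ) < 1/μ := by positivity
           linarith)]
    calc |1/(μ+1) - 1/μ| * |δ| ≤ 1 * |δ| := by
          exact mul_le_mul_of_nonneg_right h1 (abs_nonneg δ)
      _ = |δ| := one_mul _
      _ ≤ δ^2 := by nlinarith [sq_abs δ]
  have hs2 : |(1/μ^2 - 1/(μ+1)^2)*δ^2/2| ≤ δ^2/2 := by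
    rw [abs_div, abs_mul]
    have h1 : |1/μ^2 - 1/(μ+1)^2| ≤ 1 := by
      rw [abs_le]
      have h2 : 1/(μ+1)^2 ≤ 1/μ^2 := by
        apply one_div_le_one_div_of_le (by positivity); nlinarith
      have h3 : 1/μ^2 ≤ 1 := by rw [div_le_one (by positivity)]; nlinarith
      have h4 : (0:ℝ) < 1/(μ+1)^2 := by positivity
      have h5 : (0:ℝ) < 1/μ^2 := by positivity
      constructor <;> linarith
    have : |δ^2| = δ^2 := abs_of_nonneg (sq_nonneg δ)
    rw [this, abs_of_nonneg (by norm_num : (0:ℝ) ≤ (2:ℝ))]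
    apply div_le_div_of_nonneg_right _ (by norm_num)
    · nlinarith [sq_nonneg δ]
  have hcrude : |glog (μ+δ) - glog μ - (1/(μ+1) - 1/μ)*δ - (1/μ^2 - 1/(μ+1)^2)*δ^2/2|
      ≤ 4*δ^2 := by
    have := abs_sub (glog (μ+δ)) (glog μ)
    calc |glog (μ+δ) - glog μ - (1/(μ+1) - 1/μ)*δ - (1/μ^2 - 1/(μ+1)^2)*δ^2/2|
        ≤ |glog (μ+δ)| + |glog μ| + |(1/(μ+1) - 1/μ)*δ| + |(1/μ^2 - 1/(μ+1)^2)*δ^2/2| := by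
          calc |glog (μ+δ) - glog μ - (1/(μ+1) - 1/μ)*δ - (1/μ^2 - 1/(μ+1)^2)*δ^2/2|
              ≤ |glog (μ+δ) - glog μ - (1/(μ+1) - 1/μ)*δ| + |(1/μ^2 - 1/(μ+1)^2)*δ^2/2| :=
                abs_sub _ _
            _ ≤ |glog (μ+δ) - glog μ| + |(1/(μ+1) - 1/μ)*δ| + |(1/μ^2 - 1/(μ+1)^2)*δ^2/2| := by
                linarith [abs_sub (glog (μ+δ) - glog μ) ((1/(μ+1) - 1/μ)*δ)]
            _ ≤ |glog (μ+δ)| + |glog μ| + |(1/(μ+1) - 1/μ)*δ| + |(1/μ^2 - 1/(μ+1)^2)*δ^2/2| := by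
                linarith [abs_sub (glog (μ+δ)) (glog μ)]
      _ ≤ 1/2 + 1/2 + δ^2 + δ^2/2 := by linarith
      _ ≤ 4*δ^2 := by nlinarith
  have hfinal : 4*δ^2 ≤ 4*δ^10/D^8 := by
    rw [le_div_iff₀ (by positivity)]
    have h8 : D^8 ≤ δ^8 := by
      calc D^8 ≤ |δ|^8 := pow_le_pow_left₀ (by linarith) hDδ 8
        _ = δ^8 := by rw [← abs_pow, abs_of_nonneg (by positivity)]
    nlinarith [sq_nonneg δ, pow_nonneg (sq_nonneg δ) 4]
  have hpos : (0:ℝ) ≤ 2*|δ|^3/μ^4 := by positivity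
  linarith

lemma log_expand {u : ℝ} (h0 : 0 < u) (h : u ≤ 1/2) :
    |Real.log (1+u) - (u - u^2/2)| ≤ 2*u^3 := by
  have habs : |(-u)| < 1 := by rw [abs_neg, abs_of_pos h0]; linarith
  have := Real.abs_log_sub_add_sum_range_le habs 2
  have hsum : ∑ i ∈ Finset.range 2, (-u)^(i+1)/((i:ℝ)+1) = -u + u^2/2 := by
    simp [Finset.sum_range_succ]
    ring
  rw [hsum, show (1:ℝ) - -u = 1 + u by ring] at this
  have habs2 : |(-u)| = u := by rw [abs_neg, abs_of_pos h0]
  rw [habs2] at this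
  have hd : u^3/(1-u) ≤ 2*u^3 := by
    rw [div_le_iff₀ (by linarith)]
    nlinarith [pow_pos h0 3]
  rw [show Real.log (1+u) - (u - u^2/2) = -u + u^2/2 + Real.log (1+u) by ring]
  exact le_trans this hd

lemma tendsto_inv_linear (b₁ b₀ : ℝ) (hb₁ : 0 < b₁) :
    Tendsto (fun N : ℕ => 1/(b₁*(N:ℝ) + b₀)) atTop (nhds 0) := by
  have h : Tendsto (fun N : ℕ => b₁*(N:ℝ) + b₀) atTop atTop :=
    tendsto_atTop_add_const_right _ b₀ (Tendsto.const_mul_atTop hb₁ tendsto_natCast_atTop_atTop)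
  simpa [one_div, Pi.inv_def] using h.inv_tendsto_atTop

lemma tendsto_linear_ratio (a₁ a₀ b₁ b₀ : ℝ) (hb₁ : 0 < b₁) (hb₀ : 0 < b₀) :
    Tendsto (fun N : ℕ => (a₁*(N:ℝ) + a₀)/(b₁*(N:ℝ) + b₀)) atTop (nhds (a₁/b₁)) := by
  have h := tendsto_inv_atTop_nhds_zero_nat (𝕜 := ℝ)
  have hnum : Tendsto (fun N : ℕ => a₁ + a₀*((N:ℝ))⁻¹) atTop (nhds (a₁ + a₀*0)) :=
    tendsto_const_nhds.add (h.const_mul a₀)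
  have hden : Tendsto (fun N : ℕ => b₁ + b₀*((N:ℝ))⁻¹) atTop (nhds (b₁ + b₀*0)) :=
    tendsto_const_nhds.add (h.const_mul b₀)
  rw [mul_zero, add_zero] at hnum hden
  have hdiv := hnum.div hden hb₁.ne'
  refine hdiv.congr' ?_
  filter_upwards [eventually_ge_atTop 1] with N hN
  have hN0 : (0:ℝ) < N := by exact_mod_cast hN
  have hd1 : (0:ℝ) < b₁ + b₀*((N:ℝ))⁻¹ := by positivity
  have hd2 : (0:ℝ) < b₁*(N:ℝ) + b₀ := by positivity
  simp only [Pi.div_apply]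
  rw [div_eq_div_iff hd1.ne' hd2.ne']
  field_simp

lemma tendsto_sqrt_inv : Tendsto (fun N : ℕ => (Real.sqrt N)⁻¹) atTop (nhds 0) := by
  have heq : (fun N : ℕ => (Real.sqrt N)⁻¹) = fun N : ℕ => Real.sqrt ((N:ℝ)⁻¹) :=
    funext fun N => (Real.sqrt_inv N).symm
  rw [heq]
  have h2 := (Real.continuous_sqrt.tendsto 0).comp (tendsto_inv_atTop_nhds_zero_nat (𝕜 := ℝ))
  rw [Real.sqrt_zero] at h2
  exact h2.congr fun N => rfl

lemma cube_abs_le (δ : ℝ) {s : ℝ} (hs : 0 < s) : |δ|^3 ≤ (s*δ^2 + δ^4/s)/2 := by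
  have hsq : Real.sqrt s > 0 := Real.sqrt_pos.2 hs
  have h := two_mul_le_add_sq (Real.sqrt s * |δ|) (δ^2 / Real.sqrt s)
  have h1 : (Real.sqrt s * |δ|) * (δ^2 / Real.sqrt s) = |δ|^3 := by
    field_simp
    rw [← sq_abs δ]
    ring
  have h2 : (Real.sqrt s * |δ|)^2 = s * δ^2 := by
    rw [mul_pow, Real.sq_sqrt hs.le, sq_abs]
  have h3 : (δ^2 / Real.sqrt s)^2 = δ^4/s := by
    rw [div_pow, Real.sq_sqrt hs.le]
    ring_nf
  nlinarith

lemma glog_eq {t : ℝ} (ht : 0 < t) : glog t = Real.log (1 + 1/t) := by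
  rw [glog, ← Real.log_div (by linarith) ht.ne']
  congr 1
  field_simp

set_option maxHeartbeats 1000000 in
theorem aux (c ν : ℝ) (hc : 2 ≤ c) (hν : 2 ≤ ν) :
    Tendsto (fun N : ℕ => ((N:ℝ)+1)^2 *
      (glog ((N:ℝ) + c*ν) - (1/c) * ∑ x ∈ range (N+1), binPMF N (1/c) x * glog ((x:ℝ) + ν)))
      atTop (nhds (-(c-1)/2)) := by
  have hc0 : (0:ℝ) < c := by linarith
  set p : ℝ := 1/c with hp
  have hp0 : 0 < p := by positivity
  have hp1 : p ≤ 1/2 := by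
    rw [hp, div_le_div_iff₀ hc0 (by norm_num)]; linarith
  have hpc : p * c = 1 := by rw [hp]; field_simp
  set μ : ℕ → ℝ := fun N => (N:ℝ)*p + ν with hμdef
  have hμpos : ∀ N : ℕ, 0 < μ N := fun N => by
    have : (0:ℝ) ≤ (N:ℝ)*p := by positivity
    simp only [hμdef]; linarith
  have hμ2 : ∀ N : ℕ, 2 ≤ μ N := fun N => by
    have : (0:ℝ) ≤ (N:ℝ)*p := by positivity
    simp only [hμdef]; linarith
  set S2 : ℕ → ℝ := fun N => 1/(μ N)^2 - 1/(μ N + 1)^2 with hS2def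
  set R : ℕ → ℕ → ℝ := fun N x =>
    glog (μ N + ((x:ℝ) - (N:ℝ)*p)) - glog (μ N) - (1/(μ N + 1) - 1/(μ N))*((x:ℝ) - (N:ℝ)*p)
      - S2 N * ((x:ℝ) - (N:ℝ)*p)^2/2 with hRdef
  -- decomposition
  have hdecomp : ∀ N : ℕ, ((N:ℝ)+1)^2 *
      (glog ((N:ℝ) + c*ν) - (1/c) * ∑ x ∈ range (N+1), binPMF N (1/c) x * glog ((x:ℝ) + ν))
      = ((N:ℝ)+1)^2 * (glog ((N:ℝ) + c*ν) - p * glog (μ N))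
        + ((N:ℝ)+1)^2 * (-(p * (S2 N/2) * ((N:ℝ)*p*(1-p))))
        + ((N:ℝ)+1)^2 * (-(p * ∑ x ∈ range (N+1), binPMF N p x * R N x)) := by
    intro N
    have hsum : ∑ x ∈ range (N+1), binPMF N p x * glog ((x:ℝ) + ν)
        = glog (μ N) + (S2 N/2) * ((N:ℝ)*p*(1-p))
          + ∑ x ∈ range (N+1), binPMF N p x * R N x := by
      have hptw : ∀ x : ℕ, binPMF N p x * glog ((x:ℝ) + ν)
          = glog (μ N) * binPMF N p x
            + (1/(μ N + 1) - 1/(μ N)) * (binPMF N p x * ((x:ℝ) - (N:ℝ)*p))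
            + (S2 N/2) * (binPMF N p x * ((x:ℝ) - (N:ℝ)*p)^2)
            + binPMF N p x * R N x := by
        intro x
        have harg : (x:ℝ) + ν = μ N + ((x:ℝ) - (N:ℝ)*p) := by simp only [hμdef]; ring
        rw [harg, hRdef]
        ring
      rw [Finset.sum_congr rfl fun x _ => hptw x]
      rw [Finset.sum_add_distrib, Finset.sum_add_distrib, Finset.sum_add_distrib,
        ← Finset.mul_sum, ← Finset.mul_sum, ← Finset.mul_sum, sum_binPMF]
      have hmean : ∑ x ∈ range (N+1), binPMF N p x * ((x:ℝ) - (N:ℝ)*p) = 0 := by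
        have : ∀ x : ℕ, binPMF N p x * ((x:ℝ) - (N:ℝ)*p)
            = binPMF N p x * (x:ℝ) - (N:ℝ)*p * binPMF N p x := fun x => by ring
        rw [Finset.sum_congr rfl fun x _ => this x, Finset.sum_sub_distrib,
          ← Finset.mul_sum, sum_binPMF, sum_binPMF_mul]
        ring
      rw [hmean, sum_binPMF_var]
      ring
    rw [hsum, ← hp]
    ring
  rw [show (-(c-1)/2 : ℝ) = (c-1)/2 + (-(c-1)) + 0 by ring]
  refine Tendsto.congr (fun N => (hdecomp N).symm) (Tendsto.add (Tendsto.add ?_ ?_) ?_)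
  · -- T1
    have hcν : 4 ≤ c*ν := by nlinarith
    set M : ℕ → ℝ := fun N => (N:ℝ) + c*ν with hMdef
    have hMpos : ∀ N : ℕ, 0 < M N := fun N => by
      have h0 : (0:ℝ) ≤ (N:ℝ) := Nat.cast_nonneg N
      simp only [hMdef]; linarith
    have hM4 : ∀ N : ℕ, 4 ≤ M N := fun N => by
      have h0 : (0:ℝ) ≤ (N:ℝ) := Nat.cast_nonneg N
      simp only [hMdef]; linarith
    have hμM : ∀ N : ℕ, μ N = p * M N := fun N => by
      simp only [hμdef, hMdef, hp]
      field_simp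
    set err : ℝ → ℝ := fun t => glog t - (1/t - (1/t)^2/2) with herrdef
    have herr : ∀ t : ℝ, 2 ≤ t → |err t| ≤ 2*(1/t)^3 := by
      intro t ht
      have ht0 : (0:ℝ) < t := by linarith
      have hu0 : 0 < 1/t := by positivity
      have hu2 : 1/t ≤ 1/2 := by rw [div_le_div_iff₀ ht0 (by norm_num)]; linarith
      have hle := log_expand hu0 hu2
      rw [herrdef]
      simp only []
      rw [glog_eq ht0]
      exact hle
    have hkey : ∀ N : ℕ, ((N:ℝ)+1)^2 * (glog ((N:ℝ) + c*ν) - p * glog (μ N))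
        = (c-1)/2 * (((N:ℝ)+1)/(M N))^2 + ((N:ℝ)+1)^2 * (err (M N) - p * err (μ N)) := by
      intro N
      have h1 : glog (M N) = err (M N) + (1/(M N) - (1/(M N))^2/2) := by
        rw [herrdef]; ring
      have h2 : glog (μ N) = err (μ N) + (1/(μ N) - (1/(μ N))^2/2) := by
        rw [herrdef]; ring
      have hM0 : M N ≠ 0 := (hMpos N).ne'
      have hgoal : ((N:ℝ) + c*ν) = M N := by simp only [hMdef]
      rw [hgoal, h1, h2, hμM N, hp]
      have hc0' : c ≠ 0 := hc0.ne'
      field_simp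
      ring
    rw [show ((c-1)/2 : ℝ) = (c-1)/2 * 1^2 + 0 by ring]
    refine Tendsto.congr (fun N => (hkey N).symm) (Tendsto.add ?_ ?_)
    · have h := tendsto_linear_ratio 1 1 1 (c*ν) one_pos (by linarith : (0:ℝ) < c*ν)
      norm_num at h
      have hr : Tendsto (fun N : ℕ => ((N:ℝ)+1)/(M N)) atTop (nhds 1) :=
        h.congr fun N => by simp only [hMdef, one_mul]
      exact (hr.pow 2).const_mul ((c-1)/2)
    · have hr : Tendsto (fun N : ℕ => ((N:ℝ)+1)/(M N)) atTop (nhds 1) := by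
        have h := tendsto_linear_ratio 1 1 1 (c*ν) one_pos (by linarith : (0:ℝ) < c*ν)
        norm_num at h
        exact h.congr fun N => by simp only [hMdef, one_mul]
      have hinvM : Tendsto (fun N : ℕ => 1/(M N)) atTop (nhds 0) := by
        have h := tendsto_inv_linear 1 (c*ν) one_pos
        exact h.congr fun N => by simp only [hMdef, one_mul]
      have hinvμ : Tendsto (fun N : ℕ => 1/(μ N)) atTop (nhds 0) := by
        have h := tendsto_inv_linear p ν hp0
        exact h.congr fun N => by simp only [hμdef]; rw [mul_comm]
      have hrμ : Tendsto (fun N : ℕ => ((N:ℝ)+1)/(μ N)) atTop (nhds (1/p)) := by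
        have h := tendsto_linear_ratio 1 1 p ν hp0 (by linarith : (0:ℝ) < ν)
        rw [show (1/p : ℝ) = 1/p by rfl] at h
        exact h.congr fun N => by simp only [hμdef, one_mul]; rw [mul_comm]
      set B1 : ℕ → ℝ := fun N =>
        2*(1/(M N))*(((N:ℝ)+1)/(M N))^2 + 2*(1/(μ N))*(((N:ℝ)+1)/(μ N))^2 with hB1def
      have hbound : ∀ N : ℕ, ‖((N:ℝ)+1)^2 * (err (M N) - p * err (μ N))‖ ≤ B1 N := by
        intro N
        rw [Real.norm_eq_abs]
        have hM0 : M N ≠ 0 := (hMpos N).ne'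
        have hμ0 : μ N ≠ 0 := (hμpos N).ne'
        have he1 := herr (M N) (by linarith [hM4 N])
        have he2 := herr (μ N) (hμ2 N)
        have hsq : (0:ℝ) ≤ ((N:ℝ)+1)^2 := by positivity
        calc |((N:ℝ)+1)^2 * (err (M N) - p * err (μ N))|
            = ((N:ℝ)+1)^2 * |err (M N) - p * err (μ N)| := by
              rw [abs_mul, abs_of_nonneg hsq]
          _ ≤ ((N:ℝ)+1)^2 * (|err (M N)| + p * |err (μ N)|) := by
              apply mul_le_mul_of_nonneg_left _ hsq
              calc |err (M N) - p * err (μ N)| ≤ |err (M N)| + |p * err (μ N)| := abs_sub _ _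
                _ = |err (M N)| + p * |err (μ N)| := by rw [abs_mul, abs_of_pos hp0]
          _ ≤ ((N:ℝ)+1)^2 * (2*(1/(M N))^3 + 2*(1/(μ N))^3) := by
              apply mul_le_mul_of_nonneg_left _ hsq
              have h3 : p * |err (μ N)| ≤ 2*(1/(μ N))^3 := by
                calc p * |err (μ N)| ≤ 1 * |err (μ N)| := by
                      apply mul_le_mul_of_nonneg_right _ (abs_nonneg _)
                      linarith
                  _ = |err (μ N)| := one_mul _
                  _ ≤ 2*(1/(μ N))^3 := he2
              linarith
          _ = B1 N := by
              rw [hB1def]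
              field_simp
      have hB1lim : Tendsto B1 atTop (nhds 0) := by
        rw [hB1def]
        have hl1 : Tendsto (fun N : ℕ => 2*(1/(M N))*(((N:ℝ)+1)/(M N))^2) atTop
            (nhds (2*0*1^2)) := (hinvM.const_mul 2).mul (hr.pow 2)
        have hl2 : Tendsto (fun N : ℕ => 2*(1/(μ N))*(((N:ℝ)+1)/(μ N))^2) atTop
            (nhds (2*0*(1/p)^2)) := (hinvμ.const_mul 2).mul (hrμ.pow 2)
        have := hl1.add hl2
        simpa using this
      exact squeeze_zero_norm hbound hB1lim
  · -- T2
    have hν0 : (0:ℝ) < ν := by linarith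
    have hkey : ∀ N : ℕ, ((N:ℝ)+1)^2 * (-(p * (S2 N/2) * ((N:ℝ)*p*(1-p))))
        = -(p^2*(1-p)/2) * ((1*(N:ℝ)+0)/(p*(N:ℝ)+ν)) * ((1*(N:ℝ)+1)/(p*(N:ℝ)+ν))
          * ((1*(N:ℝ)+1)/(p*(N:ℝ)+(ν+1))) * ((2*p*(N:ℝ)+(2*ν+1))/(p*(N:ℝ)+(ν+1))) := by
      intro N
      have hμ0 : (N:ℝ)*p + ν ≠ 0 := by
        have := hμpos N
        simp only [hμdef] at this
        exact this.ne'
      have hμ1 : (N:ℝ)*p + ν + 1 ≠ 0 := by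
        have := hμpos N
        simp only [hμdef] at this
        intro h; linarith
      simp only [hS2def, hμdef]
      field_simp
      ring
    have h1 := tendsto_linear_ratio 1 0 p ν hp0 hν0
    have h2 := tendsto_linear_ratio 1 1 p ν hp0 hν0
    have h3 := tendsto_linear_ratio 1 1 p (ν+1) hp0 (by linarith)
    have h4 := tendsto_linear_ratio (2*p) (2*ν+1) p (ν+1) hp0 (by linarith)
    have hprod := (((h1.const_mul (-(p^2*(1-p)/2))).mul h2).mul h3).mul h4
    have hval : -(p^2*(1-p)/2) * (1/p) * (1/p) * (1/p) * ((2*p)/p) = -(c-1) := by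
      rw [hp]; field_simp
    rw [show (-(c-1) : ℝ) = -(p^2*(1-p)/2) * (1/p) * (1/p) * (1/p) * ((2*p)/p) from hval.symm]
    exact Tendsto.congr (fun N => (hkey N).symm) hprod
  · -- T3
    have hq1 : p ≤ 1 := by linarith
    have hB3lim : Tendsto (fun N : ℕ => 580*c^4*(Real.sqrt N)⁻¹ + (348364800*(2*c)^8)/(N:ℝ))
        atTop (nhds 0) := by
      have h1 := tendsto_sqrt_inv.const_mul (580*c^4)
      have h2 := tendsto_const_div_atTop_nhds_zero_nat (348364800*(2*c)^8)
      simpa using h1.add h2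
    refine squeeze_zero_norm' ?_ hB3lim
    filter_upwards [eventually_ge_atTop (⌈(2:ℝ)*c⌉₊ + 1)] with N hN
    have hN2c : 2*c ≤ (N:ℝ) := by
      calc 2*c ≤ (⌈(2:ℝ)*c⌉₊ : ℝ) := Nat.le_ceil _
        _ ≤ (N:ℝ) := by exact_mod_cast Nat.le_of_succ_le hN
    have hN1 : (1:ℝ) ≤ (N:ℝ) := by linarith
    have hNnat1 : 1 ≤ N := by exact_mod_cast hN1
    have hN0 : (0:ℝ) < N := by linarith
    set sN : ℝ := Real.sqrt N with hsNdef
    have hsN0 : 0 < sN := Real.sqrt_pos.2 hN0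
    have hss : sN * sN = (N:ℝ) := Real.mul_self_sqrt hN0.le
    -- moments
    have hm2 : ∑ x ∈ range (N+1), binPMF N p x * ((x:ℝ) - N*p)^2 ≤ (N:ℝ) := by
      rw [sum_binPMF_var N p]
      have h1 : p*(1-p) ≤ 1 := by nlinarith
      calc (N:ℝ)*p*(1-p) = (N:ℝ)*(p*(1-p)) := by ring
        _ ≤ (N:ℝ)*1 := mul_le_mul_of_nonneg_left h1 hN0.le
        _ = (N:ℝ) := mul_one _
    have hm4 : ∑ x ∈ range (N+1), binPMF N p x * ((x:ℝ) - N*p)^(2*2) ≤ 144*(N:ℝ)^2 := by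
      have := sum_binPMF_central_moment_le N 2 hNnat1 hp0.le hq1
      calc ∑ x ∈ range (N+1), binPMF N p x * ((x:ℝ) - N*p)^(2*2)
          ≤ 6 * ((2*2).factorial : ℝ) * (N:ℝ)^2 := this
        _ = 144*(N:ℝ)^2 := by norm_num [Nat.factorial]
    have hm10 : ∑ x ∈ range (N+1), binPMF N p x * ((x:ℝ) - N*p)^(2*5) ≤ 21772800*(N:ℝ)^5 := by
      have := sum_binPMF_central_moment_le N 5 hNnat1 hp0.le hq1
      calc ∑ x ∈ range (N+1), binPMF N p x * ((x:ℝ) - N*p)^(2*5)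
          ≤ 6 * ((2*5).factorial : ℝ) * (N:ℝ)^5 := this
        _ = 21772800*(N:ℝ)^5 := by norm_num [Nat.factorial]
    -- pointwise bound on R
    have hDpos : (0:ℝ) < (N:ℝ)/(2*c) := by positivity
    have h2c : (0:ℝ) < 2*c := by linarith
    have hD1 : 1 ≤ (N:ℝ)/(2*c) := by
      rw [le_div_iff₀ h2c]; linarith
    have hDμ : 2*((N:ℝ)/(2*c)) ≤ μ N := by
      have he : 2*((N:ℝ)/(2*c)) = (N:ℝ)*p := by rw [hp]; field_simp
      have : (0:ℝ) < ν := by linarith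
      simp only [hμdef]; linarith [he.le, he.ge]
    have hμc : (N:ℝ)*p ≤ μ N := by
      simp only [hμdef]; linarith
    have hRptw : ∀ x ∈ range (N+1), |R N x| ≤
        (sN*((x:ℝ) - N*p)^2 + ((x:ℝ) - N*p)^4/sN)*(c^4/(N:ℝ)^4)
          + 4*((x:ℝ) - N*p)^10*((2*c)^8/(N:ℝ)^8) := by
      intro x hx
      have hshift : 2 ≤ μ N + ((x:ℝ) - (N:ℝ)*p) := by
        have harg : μ N + ((x:ℝ) - (N:ℝ)*p) = (x:ℝ) + ν := by simp only [hμdef]; ring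
        rw [harg]
        have : (0:ℝ) ≤ (x:ℝ) := Nat.cast_nonneg x
        linarith
      have hre := R_est (hμ2 N) hD1 hDμ hshift
      have hRx : |R N x| = |glog (μ N + ((x:ℝ) - (N:ℝ)*p)) - glog (μ N)
          - (1/(μ N + 1) - 1/(μ N))*((x:ℝ) - (N:ℝ)*p)
          - (1/(μ N)^2 - 1/(μ N + 1)^2)*((x:ℝ) - (N:ℝ)*p)^2/2| := by
        rw [hRdef, hS2def]
      rw [hRx]
      refine le_trans hre ?_
      -- now bound each of the two terms
      have hμN4 : (0:ℝ) < μ N := hμpos N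
      have hc4 : 1/(μ N)^4 ≤ c^4/(N:ℝ)^4 := by
        rw [div_le_div_iff₀ (by positivity) (by positivity)]
        have h1 : (N:ℝ)/c ≤ μ N := by
          have : (N:ℝ)*p = (N:ℝ)/c := by rw [hp]; ring
          linarith [hμc, this.le, this.ge]
        have h2 : ((N:ℝ)/c)^4 ≤ (μ N)^4 := pow_le_pow_left₀ (by positivity) h1 4
        have h3 : ((N:ℝ)/c)^4 = (N:ℝ)^4/c^4 := by rw [div_pow]
        rw [h3] at h2
        have hc4pos : (0:ℝ) < c^4 := by positivity
        calc (1:ℝ)*(N:ℝ)^4 = ((N:ℝ)^4/c^4)*c^4 := by field_simp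
          _ ≤ (μ N)^4*c^4 := by
              exact mul_le_mul_of_nonneg_right h2 hc4pos.le
          _ = c^4*(μ N)^4 := by ring
      have hterm1 : 2*|(x:ℝ) - N*p|^3/(μ N)^4
          ≤ (sN*((x:ℝ) - N*p)^2 + ((x:ℝ) - N*p)^4/sN)*(c^4/(N:ℝ)^4) := by
        have hcube := cube_abs_le ((x:ℝ) - N*p) hsN0
        have h2 : 2*|(x:ℝ) - N*p|^3 ≤ sN*((x:ℝ) - N*p)^2 + ((x:ℝ) - N*p)^4/sN := by
          linarith
        calc 2*|(x:ℝ) - N*p|^3/(μ N)^4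
            = (2*|(x:ℝ) - N*p|^3)*(1/(μ N)^4) := by ring
          _ ≤ (sN*((x:ℝ) - N*p)^2 + ((x:ℝ) - N*p)^4/sN)*(c^4/(N:ℝ)^4) := by
              apply mul_le_mul h2 hc4 (by positivity) (by positivity)
      have hterm2 : 4*((x:ℝ) - N*p)^10/((N:ℝ)/(2*c))^8
          = 4*((x:ℝ) - N*p)^10*((2*c)^8/(N:ℝ)^8) := by
        rw [div_pow]
        field_simp
      linarith [hterm2.le, hterm2.ge]
    -- assemble the sum bound
    have hsum1 : |∑ x ∈ range (N+1), binPMF N p x * R N x|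
        ≤ (c^4/(N:ℝ)^4)*(sN*(N:ℝ) + 144*(N:ℝ)^2/sN) + (4*(2*c)^8/(N:ℝ)^8)*(21772800*(N:ℝ)^5) := by
      calc |∑ x ∈ range (N+1), binPMF N p x * R N x|
          ≤ ∑ x ∈ range (N+1), |binPMF N p x * R N x| := Finset.abs_sum_le_sum_abs _ _
        _ = ∑ x ∈ range (N+1), binPMF N p x * |R N x| := by
            refine Finset.sum_congr rfl fun x _ => ?_
            rw [abs_mul, abs_of_nonneg (binPMF_nonneg hp0.le hq1 x)]
        _ ≤ ∑ x ∈ range (N+1), binPMF N p x *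
              ((sN*((x:ℝ) - N*p)^2 + ((x:ℝ) - N*p)^4/sN)*(c^4/(N:ℝ)^4)
                + 4*((x:ℝ) - N*p)^10*((2*c)^8/(N:ℝ)^8)) := by
            refine Finset.sum_le_sum fun x hx => ?_
            exact mul_le_mul_of_nonneg_left (hRptw x hx) (binPMF_nonneg hp0.le hq1 x)
        _ = (c^4/(N:ℝ)^4)*(sN*(∑ x ∈ range (N+1), binPMF N p x * ((x:ℝ) - N*p)^2)
              + (∑ x ∈ range (N+1), binPMF N p x * ((x:ℝ) - N*p)^(2*2))/sN)
            + (4*(2*c)^8/(N:ℝ)^8)*(∑ x ∈ range (N+1), binPMF N p x * ((x:ℝ) - N*p)^(2*5)) := by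
            have expand : ∀ x : ℕ, binPMF N p x *
                ((sN*((x:ℝ) - N*p)^2 + ((x:ℝ) - N*p)^4/sN)*(c^4/(N:ℝ)^4)
                  + 4*((x:ℝ) - N*p)^10*((2*c)^8/(N:ℝ)^8))
                = ((c^4/(N:ℝ)^4)*sN)*(binPMF N p x * ((x:ℝ) - N*p)^2)
                  + ((c^4/(N:ℝ)^4)/sN)*(binPMF N p x * ((x:ℝ) - N*p)^(2*2))
                  + ((4*(2*c)^8/(N:ℝ)^8))*(binPMF N p x * ((x:ℝ) - N*p)^(2*5)) := by
              intro x
              norm_num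
              ring
            rw [Finset.sum_congr rfl fun x _ => expand x, Finset.sum_add_distrib,
              Finset.sum_add_distrib, ← Finset.mul_sum, ← Finset.mul_sum, ← Finset.mul_sum]
            field_simp
        _ ≤ (c^4/(N:ℝ)^4)*(sN*(N:ℝ) + 144*(N:ℝ)^2/sN) + (4*(2*c)^8/(N:ℝ)^8)*(21772800*(N:ℝ)^5) := by
            apply add_le_add
            · apply mul_le_mul_of_nonneg_left _ (by positivity)
              exact add_le_add (mul_le_mul_of_nonneg_left hm2 hsN0.le)
                ((div_le_div_iff_of_pos_right hsN0).2 hm4)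
            · exact mul_le_mul_of_nonneg_left hm10 (by positivity)
    have hfin : 4*(N:ℝ)^2*((c^4/(N:ℝ)^4)*(sN*(N:ℝ) + 144*(N:ℝ)^2/sN)
          + (4*(2*c)^8/(N:ℝ)^8)*(21772800*(N:ℝ)^5))
        = 580*c^4*sN⁻¹ + 348364800*(2*c)^8/(N:ℝ) := by
      have hNs : (N:ℝ) = sN*sN := hss.symm
      rw [hNs]
      have hs0 : sN ≠ 0 := hsN0.ne'
      field_simp
      ring
    rw [Real.norm_eq_abs]
    calc |((N:ℝ)+1)^2 * (-(p * ∑ x ∈ range (N+1), binPMF N p x * R N x))|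
        = ((N:ℝ)+1)^2 * (p * |∑ x ∈ range (N+1), binPMF N p x * R N x|) := by
          rw [abs_mul, abs_neg, abs_mul, abs_of_pos hp0,
            abs_of_nonneg (by positivity : (0:ℝ) ≤ ((N:ℝ)+1)^2)]
      _ ≤ (4*(N:ℝ)^2) * (1 * |∑ x ∈ range (N+1), binPMF N p x * R N x|) := by
          apply mul_le_mul (by nlinarith)
            (mul_le_mul_of_nonneg_right hq1 (abs_nonneg _))
            (by positivity) (by positivity)
      _ = 4*(N:ℝ)^2 * |∑ x ∈ range (N+1), binPMF N p x * R N x| := by ring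
      _ ≤ 4*(N:ℝ)^2 * ((c^4/(N:ℝ)^4)*(sN*(N:ℝ) + 144*(N:ℝ)^2/sN)
            + (4*(2*c)^8/(N:ℝ)^8)*(21772800*(N:ℝ)^5)) :=
          mul_le_mul_of_nonneg_left hsum1 (by positivity)
      _ = 580*c^4*sN⁻¹ + 348364800*(2*c)^8/(N:ℝ) := hfin


theorem risk_difference_asymptotics_in_N (m n : ℕ) (hm : 1 ≤ m) (hn : 3 ≤ n) :
    Tendsto
      (fun N : ℕ => ((N : ℝ) + 1) ^ 2 *
        (Real.log (1 + 1 / ((N : ℝ) + (1 + m) * ((1 + n) / 2))) -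
          1 / (1 + (m : ℝ)) *
            ∑ x ∈ Finset.range (N+1),
              binPMF N (1 / (1 + (m : ℝ))) x *
                (- Real.log (1 - 1 / ((x : ℝ) + 1 + (1 + n) / 2)))))
      atTop (nhds (-(m : ℝ) / 2)) := by
  have hm1 : (1:ℝ) ≤ (m:ℝ) := by exact_mod_cast hm
  have hn3 : (3:ℝ) ≤ (n:ℝ) := by exact_mod_cast hn
  have hc : (2:ℝ) ≤ 1 + (m:ℝ) := by linarith
  have hν : (2:ℝ) ≤ (1 + (n:ℝ))/2 := by linarith
  have haux := aux (1 + (m:ℝ)) ((1 + (n:ℝ))/2) hc hν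
  rw [show (-(m:ℝ)/2) = -((1 + (m:ℝ)) - 1)/2 by ring]
  refine haux.congr fun N => ?_
  have hM0 : (0:ℝ) < (N:ℝ) + (1 + (m:ℝ)) * ((1 + (n:ℝ))/2) := by
    have : (0:ℝ) ≤ (N:ℝ) := Nat.cast_nonneg N
    nlinarith
  have h1 : glog ((N:ℝ) + (1 + (m:ℝ)) * ((1 + (n:ℝ))/2))
      = Real.log (1 + 1 / ((N : ℝ) + (1 + m) * ((1 + n) / 2))) := glog_eq hM0
  have h2 : ∀ x : ℕ, glog ((x:ℝ) + (1 + (n:ℝ))/2)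
      = - Real.log (1 - 1 / ((x : ℝ) + 1 + (1 + n) / 2)) := by
    intro x
    set w : ℝ := (x:ℝ) + (1 + (n:ℝ))/2 with hw
    have hw0 : (0:ℝ) < w := by
      have : (0:ℝ) ≤ (x:ℝ) := Nat.cast_nonneg x
      rw [hw]; linarith
    have harg : (x : ℝ) + 1 + (1 + (n:ℝ)) / 2 = w + 1 := by rw [hw]; ring
    rw [harg]
    have hfr : 1 - 1/(w+1) = w/(w+1) := by
      field_simp
      ring
    rw [hfr, Real.log_div hw0.ne' (by linarith), glog]
    ring
  rw [h1]
  have hs : ∑ x ∈ Finset.range (N+1), binPMF N (1/(1+(m:ℝ))) x * glog ((x:ℝ) + (1+(n:ℝ))/2)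
      = ∑ x ∈ Finset.range (N+1), binPMF N (1/(1+(m:ℝ))) x *
          (- Real.log (1 - 1/((x:ℝ) + 1 + (1+(n:ℝ))/2))) :=
    Finset.sum_congr rfl fun x _ => by rw [h2 x]
  rw [hs]
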